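/- The graph of lines of a finite projective rectangle of order (m,n) is strongly regular with parameters ν = n^2, r = (m+1)(n-1), λ = n + m(m-1) - 2, μ = m(m+1): every two adjacent vertices have exactly n + m(m-1) - 2 common neighbors, and every two non-adjacent vertices have exactly m(m+1) common neighbors. -/

import Mathlib

open scoped Classical

/-- A projective rectangle: an incidence structure satisfying axioms (A1)–(A6). -/
structure ProjRect (P L : Type*) where
  incid : P → L → Prop
  /-- (A4) the special point -/
  D : P
  /-- (A1) every two distinct points are incident with exactly one line -/
  A1 : ∀ p q : P, p ≠ q → ∃! l : L, incid p l ∧ incid q l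
  /-- (A2) there exist four points with no three collinear -/
  A2 : ∃ p1 p2 p3 p4 : P, p1 ≠ p2 ∧ p1 ≠ p3 ∧ p1 ≠ p4 ∧ p2 ≠ p3 ∧ p2 ≠ p4 ∧ p3 ≠ p4 ∧
    ∀ l : L, ¬(incid p1 l ∧ incid p2 l ∧ incid p3 l) ∧ ¬(incid p1 l ∧ incid p2 l ∧ incid p4 l) ∧
      ¬(incid p1 l ∧ incid p3 l ∧ incid p4 l) ∧ ¬(incid p2 l ∧ incid p3 l ∧ incid p4 l)
  /-- (A3) every line has at least three points -/
  A3 : ∀ l : L, ∃ p1 p2 p3 : P, p1 ≠ p2 ∧ p1 ≠ p3 ∧ p2 ≠ p3 ∧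
    incid p1 l ∧ incid p2 l ∧ incid p3 l
  /-- (A5) each special line intersects every other line in exactly one point -/
  A5 : ∀ s l : L, incid D s → l ≠ s → ∃! p : P, incid p s ∧ incid p l
  /-- (A6) Pasch-type axiom -/
  A6 : ∀ l1 l2 g h : L, ¬incid D l1 → ¬incid D l2 → (∃ p : P, incid p l1 ∧ incid p l2) →
    (∃ p1 p2 p3 p4 : P, p1 ≠ p2 ∧ p1 ≠ p3 ∧ p1 ≠ p4 ∧ p2 ≠ p3 ∧ p2 ≠ p4 ∧ p3 ≠ p4 ∧
      incid p1 g ∧ incid p1 l1 ∧ incid p2 g ∧ incid p2 l2 ∧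
      incid p3 h ∧ incid p3 l1 ∧ incid p4 h ∧ incid p4 l2) →
    ∃ p : P, incid p g ∧ incid p h

namespace ProjRect

variable {P L : Type*} (R : ProjRect P L)

/-- A line is special if it is incident with the special point `D`. -/
def SpecialLine (l : L) : Prop := R.incid R.D l

/-- A line is ordinary if it is not incident with `D`. -/
def OrdinaryLine (l : L) : Prop := ¬ R.incid R.D l

/-- A point is ordinary if it is not `D`. -/
def OrdinaryPoint (p : P) : Prop := p ≠ R.D

/-- The set of points of a line. -/
def points (l : L) : Set P := {p | R.incid p l}

/-- `R` has order `(m, n)`: there are `m+1` special lines, each with `n+1` points. -/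
def HasOrder (m n : ℕ) : Prop :=
  {l : L | R.SpecialLine l}.ncard = m + 1 ∧
  ∀ l : L, R.SpecialLine l → (R.points l).ncard = n + 1

/-- Nontrivial: there exist two disjoint ordinary lines (i.e. `R` is not a projective plane). -/
def Nontrivial : Prop :=
  ∃ l1 l2 : L, R.OrdinaryLine l1 ∧ R.OrdinaryLine l2 ∧ ∀ p : P, ¬(R.incid p l1 ∧ R.incid p l2)

/-- An incidence substructure `(Ps, Ls)` that is a projective plane. -/
def IsSubplane (Ps : Set P) (Ls : Set L) : Prop :=
  (∀ p ∈ Ps, ∀ q ∈ Ps, p ≠ q → ∃! l : L, l ∈ Ls ∧ R.incid p l ∧ R.incid q l) ∧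
  (∀ l ∈ Ls, ∀ l' ∈ Ls, l ≠ l' → ∃! p : P, p ∈ Ps ∧ R.incid p l ∧ R.incid p l') ∧
  (∀ l ∈ Ls, ∀ p : P, R.incid p l → p ∈ Ps) ∧
  (∃ p1 ∈ Ps, ∃ p2 ∈ Ps, ∃ p3 ∈ Ps, ∃ p4 ∈ Ps,
    p1 ≠ p2 ∧ p1 ≠ p3 ∧ p1 ≠ p4 ∧ p2 ≠ p3 ∧ p2 ≠ p4 ∧ p3 ≠ p4 ∧
    ∀ l ∈ Ls, ¬(R.incid p1 l ∧ R.incid p2 l ∧ R.incid p3 l) ∧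
      ¬(R.incid p1 l ∧ R.incid p2 l ∧ R.incid p4 l) ∧
      ¬(R.incid p1 l ∧ R.incid p3 l ∧ R.incid p4 l) ∧
      ¬(R.incid p2 l ∧ R.incid p3 l ∧ R.incid p4 l))

/-- A plane: a maximal subplane. -/
def IsPlane (Ps : Set P) (Ls : Set L) : Prop :=
  R.IsSubplane Ps Ls ∧
  ∀ Ps' Ls', R.IsSubplane Ps' Ls' → Ps ⊆ Ps' → Ls ⊆ Ls' → Ps = Ps' ∧ Ls = Ls'

/-- The graph of lines: vertices are the ordinary lines, adjacent iff they intersect. -/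
def lineGraph : SimpleGraph {l : L // R.OrdinaryLine l} where
  Adj l1 l2 := l1 ≠ l2 ∧ ∃ p : P, R.incid p l1.1 ∧ R.incid p l2.1
  symm := by
    constructor
    rintro a b ⟨hne, p, h1, h2⟩
    exact ⟨hne.symm, p, h2, h1⟩
  loopless := by
    constructor
    rintro a ⟨hne, -⟩
    exact hne rfl

end ProjRect

namespace PRAux

open ProjRect Set

variable {P L : Type*} (R : ProjRect P L)

/-- Two distinct points lie on a unique line. -/
theorem unique_line {l l' : L} {p q : P} (hpq : p ≠ q) (hpl : R.incid p l) (hql : R.incid q l)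
    (hpl' : R.incid p l') (hql' : R.incid q l') : l = l' := by
  obtain ⟨g, -, hu⟩ := R.A1 p q hpq
  rw [hu l ⟨hpl, hql⟩, hu l' ⟨hpl', hql'⟩]

/-- Two distinct lines meet in at most one point. -/
theorem meet_unique {l l' : L} (hne : l ≠ l') {p q : P} (hp : R.incid p l) (hp' : R.incid p l')
    (hq : R.incid q l) (hq' : R.incid q l') : p = q := by
  by_contra hpq
  exact hne (unique_line R hpq hp hq hp' hq')

noncomputable def lineThrough [Nonempty L] (p q : P) : L :=
  if h : p ≠ q then (R.A1 p q h).exists.choose else Classical.arbitrary L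

theorem lineThrough_left [Nonempty L] {p q : P} (h : p ≠ q) :
    R.incid p (lineThrough R p q) := by
  rw [lineThrough, dif_pos h]; exact (R.A1 p q h).exists.choose_spec.1

theorem lineThrough_right [Nonempty L] {p q : P} (h : p ≠ q) :
    R.incid q (lineThrough R p q) := by
  rw [lineThrough, dif_pos h]; exact (R.A1 p q h).exists.choose_spec.2

theorem eq_lineThrough [Nonempty L] {p q : P} {l : L} (h : p ≠ q) (hp : R.incid p l)
    (hq : R.incid q l) : l = lineThrough R p q :=
  unique_line R h hp hq (lineThrough_left R h) (lineThrough_right R h)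

/-- Two distinct special lines meet only at `D`. -/
theorem special_inter {s s' : L} (hs : R.SpecialLine s) (hs' : R.SpecialLine s') (hne : s ≠ s')
    {p : P} (hp : R.incid p s) (hp' : R.incid p s') : p = R.D := by
  by_contra hD
  exact hne (unique_line R hD hp hs hp' hs')

theorem ord_point {l : L} {p : P} (hl : R.OrdinaryLine l) (hp : R.incid p l) : p ≠ R.D :=
  fun e => hl (e ▸ hp)

theorem special_lineThrough [Nonempty L] {p : P} (h : p ≠ R.D) :
    R.SpecialLine (lineThrough R p R.D) := lineThrough_right R h

end PRAux
namespace PRAux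

set_option linter.unusedSectionVars false

open ProjRect Set

theorem ncard_sprod {α β : Type*} (s : Set α) (t : Set β) :
    (s ×ˢ t).ncard = s.ncard * t.ncard := by
  have := Nat.card_congr (Equiv.Set.prod s t)
  rw [Nat.card_prod] at this
  simpa [Nat.card_coe_set_eq] using this

theorem ncard_biUnion_const {α β : Type*} [Fintype α] [Fintype β] (s : Set α) (f : α → Set β)
    (hdisj : ∀ a ∈ s, ∀ b ∈ s, a ≠ b → Disjoint (f a) (f b)) (k : ℕ)
    (hk : ∀ a ∈ s, (f a).ncard = k) :
    (⋃ a ∈ s, f a).ncard = s.ncard * k := by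
  classical
  rw [Set.ncard_eq_toFinset_card', Set.ncard_eq_toFinset_card']
  have he : (⋃ a ∈ s, f a).toFinset = s.toFinset.biUnion (fun a => (f a).toFinset) := by
    ext b; simp
  rw [he, Finset.card_biUnion]
  · rw [Finset.sum_congr rfl (fun a ha => ?_), Finset.sum_const, smul_eq_mul]
    rw [← Set.ncard_eq_toFinset_card', hk a (by simpa using ha)]
  · intro a ha b hb hab
    have := hdisj a (by simpa using ha) b (by simpa using hb) hab
    rw [Function.onFun, Finset.disjoint_left]
    intro x hx hx2
    exact (Set.disjoint_left.1 this (by simpa using hx)) (by simpa using hx2)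

variable {P L : Type*} (R : ProjRect P L) [Fintype P] [Fintype L] {m n : ℕ}

theorem nonempty_special (h : R.HasOrder m n) : ∃ s, R.SpecialLine s := by
  have h1 := h.1
  have : {l : L | R.SpecialLine l}.Nonempty := by
    apply Set.nonempty_of_ncard_ne_zero; omega
  exact this

theorem nonempty_L (h : R.HasOrder m n) : Nonempty L := ⟨(nonempty_special R h).choose⟩

theorem m_pos (h : R.HasOrder m n) : 1 ≤ m := by
  haveI : Nonempty L := nonempty_L R h
  obtain ⟨p1, p2, p3, p4, h12, h13, h14, h23, h24, h34, hcol⟩ := R.A2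
  have key : ∃ a b c : P, a ≠ b ∧ a ≠ c ∧ b ≠ c ∧ a ≠ R.D ∧ b ≠ R.D ∧ c ≠ R.D ∧
      ∀ l, ¬(R.incid a l ∧ R.incid b l ∧ R.incid c l) := by
    by_cases e1 : p1 = R.D
    · subst e1
      exact ⟨p2, p3, p4, h23, h24, h34, Ne.symm h12, Ne.symm h13, Ne.symm h14,
        fun l => (hcol l).2.2.2⟩
    by_cases e2 : p2 = R.D
    · subst e2
      exact ⟨p1, p3, p4, h13, h14, h34, e1, Ne.symm h23, Ne.symm h24,
        fun l => (hcol l).2.2.1⟩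
    by_cases e3 : p3 = R.D
    · subst e3
      exact ⟨p1, p2, p4, h12, h14, h24, e1, e2, Ne.symm h34, fun l => (hcol l).2.1⟩
    by_cases e4 : p4 = R.D
    · subst e4
      exact ⟨p1, p2, p3, h12, h13, h23, e1, e2, e3, fun l => (hcol l).1⟩
    · exact ⟨p1, p2, p3, h12, h13, h23, e1, e2, e3, fun l => (hcol l).1⟩
  obtain ⟨a, b, c, hab, hac, hbc, haD, hbD, hcD, hncol⟩ := key
  have hspec : ∃ s1 s2 : L, R.SpecialLine s1 ∧ R.SpecialLine s2 ∧ s1 ≠ s2 := by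
    by_cases hsab : lineThrough R a R.D = lineThrough R b R.D
    · refine ⟨lineThrough R a R.D, lineThrough R c R.D, special_lineThrough R haD,
        special_lineThrough R hcD, fun e => hncol (lineThrough R a R.D) ⟨lineThrough_left R haD,
          by rw [hsab]; exact lineThrough_left R hbD, by rw [e]; exact lineThrough_left R hcD⟩⟩
    · exact ⟨_, _, special_lineThrough R haD, special_lineThrough R hbD, hsab⟩
  obtain ⟨s1, s2, hs1, hs2, hne⟩ := hspec
  have : 1 < {l : L | R.SpecialLine l}.ncard :=
    (Set.one_lt_ncard_iff (Set.toFinite _)).2 ⟨s1, s2, hs1, hs2, hne⟩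
  rw [h.1] at this; omega

end PRAux
namespace PRAux

set_option linter.unusedSectionVars false

open ProjRect Set

variable {P L : Type*} (R : ProjRect P L) [Fintype P] [Fintype L] {m n : ℕ}

theorem n_ge_two (h : R.HasOrder m n) : 2 ≤ n := by
  obtain ⟨s, hs⟩ := nonempty_special R h
  obtain ⟨a, b, c, hab, hac, hbc, ha, hb, hc⟩ := R.A3 s
  have hsub : ({a, b, c} : Set P) ⊆ R.points s := by
    intro x hx
    rcases hx with rfl | rfl | rfl <;> assumption
  have h3 : ({a, b, c} : Set P).ncard = 3 := by
    rw [Set.ncard_insert_of_notMem (by simp [hab, hac]) (Set.toFinite _),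
      Set.ncard_insert_of_notMem (by simp [hbc]) (Set.toFinite _), Set.ncard_singleton]
  have hle : 3 ≤ (R.points s).ncard := h3 ▸ Set.ncard_le_ncard hsub (Set.toFinite _)
  rw [h.2 s hs] at hle
  omega

theorem exists_special_ne (h : R.HasOrder m n) (hm : 1 ≤ m) (s0 : L) :
    ∃ s', R.SpecialLine s' ∧ s' ≠ s0 := by
  have h1 : 1 < {l : L | R.SpecialLine l}.ncard := by rw [h.1]; omega
  obtain ⟨b, hb, hbne⟩ := Set.exists_ne_of_one_lt_ncard h1 s0
  exact ⟨b, hb, hbne⟩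

theorem special_diff_ncard (h : R.HasOrder m n) {s : L} (hs : R.SpecialLine s) :
    (R.points s \ {R.D}).ncard = n := by
  have hD : R.D ∈ R.points s := hs
  rw [Set.ncard_diff_singleton_of_mem hD, h.2 s hs]; omega

theorem lines_through (h : R.HasOrder m n) (hm : 1 ≤ m) {p : P} (hp : p ≠ R.D) :
    {l : L | R.OrdinaryLine l ∧ R.incid p l}.ncard = n := by
  haveI : Nonempty L := nonempty_L R h
  have hps : R.incid p (lineThrough R p R.D) := lineThrough_left R hp
  have hsSpec : R.SpecialLine (lineThrough R p R.D) := special_lineThrough R hp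
  obtain ⟨s', hs', hs's⟩ := exists_special_ne R h hm (lineThrough R p R.D)
  have hpns' : ¬ R.incid p s' := fun hc => hp (special_inter R hs' hsSpec hs's hc hps)
  have key : (fun q => lineThrough R p q) '' (R.points s' \ {R.D}) =
      {l | R.OrdinaryLine l ∧ R.incid p l} := by
    ext l
    constructor
    · rintro ⟨q, ⟨hqs', hqD⟩, rfl⟩
      have hqD' : q ≠ R.D := by simpa using hqD
      have hpq : p ≠ q := fun e => hpns' (e ▸ hqs')
      refine ⟨fun hD => ?_, lineThrough_left R hpq⟩
      have h1 : lineThrough R p q = lineThrough R q R.D :=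
        eq_lineThrough R hqD' (lineThrough_right R hpq) hD
      have hs'eq : s' = lineThrough R q R.D := eq_lineThrough R hqD' hqs' hs'
      exact hpns' (by rw [hs'eq, ← h1]; exact lineThrough_left R hpq)
    · rintro ⟨hlOrd, hpl⟩
      have hls' : l ≠ s' := fun e => hlOrd (e ▸ hs')
      obtain ⟨q, ⟨hqs', hql⟩, -⟩ := R.A5 s' l hs' hls'
      have hqD : q ≠ R.D := ord_point R hlOrd hql
      have hpq : p ≠ q := fun e => hpns' (e ▸ hqs')
      exact ⟨q, ⟨hqs', by simpa using hqD⟩, (eq_lineThrough R hpq hpl hql).symm⟩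
  have hinj : Set.InjOn (fun q => lineThrough R p q) (R.points s' \ {R.D}) := by
    rintro q1 ⟨hq1, -⟩ q2 ⟨hq2, -⟩ he
    simp only at he
    have hpq1 : p ≠ q1 := fun e => hpns' (e ▸ hq1)
    have hpq2 : p ≠ q2 := fun e => hpns' (e ▸ hq2)
    by_contra hq12
    have h1 : R.incid q1 (lineThrough R p q1) := lineThrough_right R hpq1
    have h2 : R.incid q2 (lineThrough R p q1) := by rw [he]; exact lineThrough_right R hpq2
    have : lineThrough R p q1 = s' := unique_line R hq12 h1 h2 hq1 hq2
    exact hpns' (this ▸ lineThrough_left R hpq1)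
  rw [← key, Set.ncard_image_of_injOn hinj, special_diff_ncard R h hs']

theorem points_ord (h : R.HasOrder m n) {u : L} (hu : R.OrdinaryLine u) :
    (R.points u).ncard = m + 1 := by
  haveI : Nonempty L := nonempty_L R h
  have key : (fun p => lineThrough R p R.D) '' R.points u = {l : L | R.SpecialLine l} := by
    ext s
    constructor
    · rintro ⟨p, hp, rfl⟩
      exact special_lineThrough R (ord_point R hu hp)
    · intro hs
      have hus : u ≠ s := fun e => hu (e ▸ hs)
      obtain ⟨p, ⟨hps, hpu⟩, -⟩ := R.A5 s u hs hus
      have hpD : p ≠ R.D := ord_point R hu hpu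
      exact ⟨p, hpu, (eq_lineThrough R hpD hps hs).symm⟩
  have hinj : Set.InjOn (fun p => lineThrough R p R.D) (R.points u) := by
    intro p1 hp1 p2 hp2 he
    simp only at he
    by_contra hne
    have h1 : R.incid p1 (lineThrough R p1 R.D) := lineThrough_left R (ord_point R hu hp1)
    have h2 : R.incid p2 (lineThrough R p1 R.D) := by
      rw [he]; exact lineThrough_left R (ord_point R hu hp2)
    have : u = lineThrough R p1 R.D := unique_line R hne hp1 hp2 h1 h2
    exact hu (this ▸ lineThrough_right R (ord_point R hu hp1))
  rw [← h.1, ← key, Set.ncard_image_of_injOn hinj]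

theorem ord_lines_ncard (h : R.HasOrder m n) (hm : 1 ≤ m) :
    {l : L | R.OrdinaryLine l}.ncard = n * n := by
  haveI : Nonempty L := nonempty_L R h
  obtain ⟨s, hs⟩ := nonempty_special R h
  obtain ⟨s', hs', hne⟩ := exists_special_ne R h hm s
  have key : (fun x : P × P => lineThrough R x.1 x.2) ''
      ((R.points s \ {R.D}) ×ˢ (R.points s' \ {R.D})) = {l : L | R.OrdinaryLine l} := by
    ext l
    constructor
    · rintro ⟨⟨q, q'⟩, ⟨⟨hq, hqD⟩, ⟨hq', hq'D⟩⟩, rfl⟩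
      have hqD' : q ≠ R.D := by simpa using hqD
      have hq'D' : q' ≠ R.D := by simpa using hq'D
      have hqq' : q ≠ q' := fun e => hqD' (special_inter R hs hs' (hne.symm) hq (e ▸ hq'))
      intro hD
      have h1 : lineThrough R q q' = lineThrough R q R.D :=
        eq_lineThrough R hqD' (lineThrough_left R hqq') hD
      have h2 : s = lineThrough R q R.D := eq_lineThrough R hqD' hq hs
      have h3 : lineThrough R q q' = lineThrough R q' R.D :=
        eq_lineThrough R hq'D' (lineThrough_right R hqq') hD
      have h4 : s' = lineThrough R q' R.D := eq_lineThrough R hq'D' hq' hs'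
      exact hne.symm (by rw [h4, ← h3, h1, ← h2])
    · intro hl
      have hls : l ≠ s := fun e => hl (e ▸ hs)
      have hls' : l ≠ s' := fun e => hl (e ▸ hs')
      obtain ⟨q, ⟨hqs, hql⟩, -⟩ := R.A5 s l hs hls
      obtain ⟨q', ⟨hq's', hq'l⟩, -⟩ := R.A5 s' l hs' hls'
      have hqD : q ≠ R.D := ord_point R hl hql
      have hq'D : q' ≠ R.D := ord_point R hl hq'l
      have hqq' : q ≠ q' := fun e => hqD (special_inter R hs hs' hne.symm hqs (e ▸ hq's'))
      exact ⟨⟨q, q'⟩, ⟨⟨hqs, by simpa using hqD⟩, ⟨hq's', by simpa using hq'D⟩⟩,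
        (eq_lineThrough R hqq' hql hq'l).symm⟩
  have hinj : Set.InjOn (fun x : P × P => lineThrough R x.1 x.2)
      ((R.points s \ {R.D}) ×ˢ (R.points s' \ {R.D})) := by
    rintro ⟨q1, q1'⟩ ⟨⟨hq1, hq1D⟩, ⟨hq1', hq1'D⟩⟩ ⟨q2, q2'⟩ ⟨⟨hq2, hq2D⟩, ⟨hq2', hq2'D⟩⟩ he
    simp only at he
    have hq1D' : q1 ≠ R.D := by simpa using hq1D
    have hq1'D' : q1' ≠ R.D := by simpa using hq1'D
    have hq2D' : q2 ≠ R.D := by simpa using hq2D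
    have hq2'D' : q2' ≠ R.D := by simpa using hq2'D
    have h11 : q1 ≠ q1' := fun e => hq1D' (special_inter R hs hs' hne.symm hq1 (e ▸ hq1'))
    have h22 : q2 ≠ q2' := fun e => hq2D' (special_inter R hs hs' hne.symm hq2 (e ▸ hq2'))
    have hlq1 : R.incid q1 (lineThrough R q1 q1') := lineThrough_left R h11
    have hlq1' : R.incid q1' (lineThrough R q1 q1') := lineThrough_right R h11
    have hlq2 : R.incid q2 (lineThrough R q1 q1') := by rw [he]; exact lineThrough_left R h22
    have hlq2' : R.incid q2' (lineThrough R q1 q1') := by rw [he]; exact lineThrough_right R h22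
    have hlnes : lineThrough R q1 q1' ≠ s := by
      intro e
      exact hq1'D' (special_inter R hs hs' hne.symm (e ▸ hlq1') hq1')
    have hlnes' : lineThrough R q1 q1' ≠ s' := by
      intro e
      exact hq1D' (special_inter R hs' hs hne (e ▸ hlq1) hq1)
    have e1 : q1 = q2 := meet_unique R hlnes hlq1 hq1 hlq2 hq2
    have e2 : q1' = q2' := meet_unique R hlnes' hlq1' hq1' hlq2' hq2'
    rw [Prod.mk.injEq]
    exact ⟨e1, e2⟩
  rw [← key, Set.ncard_image_of_injOn hinj, ncard_sprod, special_diff_ncard R h hs,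
    special_diff_ncard R h hs']

end PRAux
namespace PRAux

set_option linter.unusedSectionVars false

open ProjRect Set

variable {P L : Type*} (R : ProjRect P L) [Fintype P] [Fintype L] {m n : ℕ}

/-- The neighbor set of an ordinary line, seen inside `L`. -/
def NS (u : L) : Set L := {l | R.OrdinaryLine l ∧ l ≠ u ∧ ∃ p, R.incid p u ∧ R.incid p l}

theorem NS_ncard (h : R.HasOrder m n) (hm : 1 ≤ m) {u : L} (hu : R.OrdinaryLine u) :
    (NS R u).ncard = (m + 1) * (n - 1) := by
  have key : NS R u = ⋃ p ∈ R.points u, ({l | R.OrdinaryLine l ∧ R.incid p l} \ {u}) := by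
    ext l
    simp only [NS, Set.mem_setOf_eq, Set.mem_iUnion, Set.mem_diff, Set.mem_singleton_iff]
    constructor
    · rintro ⟨hord, hne, p, hpu, hpl⟩
      exact ⟨p, hpu, ⟨hord, hpl⟩, hne⟩
    · rintro ⟨p, hpu, ⟨hord, hpl⟩, hne⟩
      exact ⟨hord, hne, p, hpu, hpl⟩
  rw [key, ncard_biUnion_const _ _ ?_ (n - 1) ?_, points_ord R h hu]
  · intro p hp q hq hpq
    rw [Set.disjoint_left]
    rintro l ⟨⟨hord, hpl⟩, hlu⟩ ⟨⟨-, hql⟩, -⟩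
    exact hlu (unique_line R hpq hpl hql hp hq)
  · intro p hp
    rw [Set.ncard_diff_singleton_of_mem (show u ∈ {l : L | R.OrdinaryLine l ∧ R.incid p l} from ⟨hu, hp⟩),
      lines_through R h hm (ord_point R hu hp)]

end PRAux
namespace PRAux

set_option linter.unusedSectionVars false
set_option maxHeartbeats 1000000

open ProjRect Set

variable {P L : Type*} (R : ProjRect P L) [Fintype P] [Fintype L] {m n : ℕ}

theorem common_nonadj (h : R.HasOrder m n) {u v : L} (hu : R.OrdinaryLine u)
    (hv : R.OrdinaryLine v) (huv : u ≠ v) (hdisj : ∀ p, ¬(R.incid p u ∧ R.incid p v)) :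
    (NS R u ∩ NS R v).ncard = m * (m + 1) := by
  haveI : Nonempty L := nonempty_L R h
  set T : Set (P × P) := {x ∈ R.points u ×ˢ R.points v |
    lineThrough R x.1 R.D ≠ lineThrough R x.2 R.D} with hT
  set Bad : Set (P × P) := {x ∈ R.points u ×ˢ R.points v |
    lineThrough R x.1 R.D = lineThrough R x.2 R.D} with hBad
  -- basic facts about a good pair
  have main : ∀ q r : P, q ∈ R.points u → r ∈ R.points v →
      lineThrough R q R.D ≠ lineThrough R r R.D →
      q ≠ r ∧ R.OrdinaryLine (lineThrough R q r) ∧ lineThrough R q r ≠ u ∧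
        lineThrough R q r ≠ v := by
    intro q r hq hr hsne
    have hqD : q ≠ R.D := ord_point R hu hq
    have hrD : r ≠ R.D := ord_point R hv hr
    have hqr : q ≠ r := fun e => hdisj q ⟨hq, e ▸ hr⟩
    refine ⟨hqr, fun hD => ?_, fun e => hdisj r ⟨e ▸ lineThrough_right R hqr, hr⟩,
      fun e => hdisj q ⟨hq, e ▸ lineThrough_left R hqr⟩⟩
    exact hsne ((eq_lineThrough R hqD (lineThrough_left R hqr) hD).symm.trans
      (eq_lineThrough R hrD (lineThrough_right R hqr) hD))
  have key : (fun x : P × P => lineThrough R x.1 x.2) '' T = NS R u ∩ NS R v := by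
    ext l
    constructor
    · rintro ⟨⟨q, r⟩, ⟨⟨hq, hr⟩, hcond⟩, rfl⟩
      obtain ⟨hqr, hord, hlu, hlv⟩ := main q r hq hr hcond
      exact ⟨⟨hord, hlu, q, hq, lineThrough_left R hqr⟩,
        ⟨hord, hlv, r, hr, lineThrough_right R hqr⟩⟩
    · rintro ⟨⟨hord, hlu, q, hqu, hql⟩, ⟨-, hlv, r, hrv, hrl⟩⟩
      have hqr : q ≠ r := fun e => hdisj q ⟨hqu, e ▸ hrv⟩
      have hqD : q ≠ R.D := ord_point R hord hql
      have hrD : r ≠ R.D := ord_point R hord hrl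
      have hcond : lineThrough R q R.D ≠ lineThrough R r R.D := by
        intro e
        have hqs : R.incid q (lineThrough R q R.D) := lineThrough_left R hqD
        have hrs : R.incid r (lineThrough R q R.D) := by rw [e]; exact lineThrough_left R hrD
        have : l = lineThrough R q R.D := unique_line R hqr hql hrl hqs hrs
        exact hord (this ▸ lineThrough_right R hqD)
      exact ⟨⟨q, r⟩, ⟨⟨hqu, hrv⟩, hcond⟩, (eq_lineThrough R hqr hql hrl).symm⟩
  have hinj : Set.InjOn (fun x : P × P => lineThrough R x.1 x.2) T := by
    rintro ⟨q1, r1⟩ ⟨⟨hq1, hr1⟩, hc1⟩ ⟨q2, r2⟩ ⟨⟨hq2, hr2⟩, hc2⟩ he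
    simp only at he
    obtain ⟨h11, -, hlu1, hlv1⟩ := main q1 r1 hq1 hr1 hc1
    obtain ⟨h22, -, -, -⟩ := main q2 r2 hq2 hr2 hc2
    have e1 : q1 = q2 := meet_unique R hlu1 (lineThrough_left R h11) hq1
      (by rw [he]; exact lineThrough_left R h22) hq2
    have e2 : r1 = r2 := meet_unique R hlv1 (lineThrough_right R h11) hr1
      (by rw [he]; exact lineThrough_right R h22) hr2
    rw [Prod.mk.injEq]
    exact ⟨e1, e2⟩
  -- counting T
  have hTeq : T = (R.points u ×ˢ R.points v) \ Bad := by
    ext x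
    simp only [hT, hBad, Set.mem_setOf_eq, Set.mem_diff]
    tauto
  have hBadsub : Bad ⊆ R.points u ×ˢ R.points v := fun x hx => hx.1
  have hBadcard : Bad.ncard = m + 1 := by
    have hbij : Prod.fst '' Bad = R.points u := by
      ext q
      constructor
      · rintro ⟨⟨q', r⟩, ⟨⟨hq', -⟩, -⟩, rfl⟩
        exact hq'
      · intro hq
        have hqD : q ≠ R.D := ord_point R hu hq
        have hsSpec : R.SpecialLine (lineThrough R q R.D) := special_lineThrough R hqD
        have hvs : v ≠ lineThrough R q R.D := fun e => hv (e ▸ hsSpec)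
        obtain ⟨r, ⟨hrs, hrv⟩, -⟩ := R.A5 (lineThrough R q R.D) v hsSpec hvs
        have hrD : r ≠ R.D := ord_point R hv hrv
        exact ⟨⟨q, r⟩, ⟨⟨hq, hrv⟩, eq_lineThrough R hrD hrs (lineThrough_right R hqD)⟩, rfl⟩
    have hfinj : Set.InjOn Prod.fst Bad := by
      rintro ⟨q1, r1⟩ ⟨⟨hq1, hr1⟩, hc1⟩ ⟨q2, r2⟩ ⟨⟨hq2, hr2⟩, hc2⟩ he
      simp only at he
      subst he
      have hqD : q1 ≠ R.D := ord_point R hu hq1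
      have hr1D : r1 ≠ R.D := ord_point R hv hr1
      have hr2D : r2 ≠ R.D := ord_point R hv hr2
      have hsSpec : R.SpecialLine (lineThrough R q1 R.D) := special_lineThrough R hqD
      have hsv : lineThrough R q1 R.D ≠ v := fun e => hv (e ▸ hsSpec)
      have hr1s : R.incid r1 (lineThrough R q1 R.D) := by
        rw [hc1]; exact lineThrough_left R hr1D
      have hr2s : R.incid r2 (lineThrough R q1 R.D) := by
        rw [hc2]; exact lineThrough_left R hr2D
      have : r1 = r2 := meet_unique R hsv hr1s hr1 hr2s hr2
      rw [this]
    rw [← points_ord R h hu, ← hbij, Set.ncard_image_of_injOn hfinj]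
  have hTcard : T.ncard = (m + 1) * (m + 1) - (m + 1) := by
    rw [hTeq, Set.ncard_diff hBadsub (Set.toFinite _), hBadcard, ncard_sprod,
      points_ord R h hu, points_ord R h hv]
  rw [← key, Set.ncard_image_of_injOn hinj, hTcard]
  have : (m + 1) * (m + 1) = m * (m + 1) + (m + 1) := by ring
  omega

end PRAux
namespace PRAux

set_option linter.unusedSectionVars false
set_option maxHeartbeats 1000000

open ProjRect Set

variable {P L : Type*} (R : ProjRect P L) [Fintype P] [Fintype L] {m n : ℕ}

theorem common_adj (h : R.HasOrder m n) (hm : 1 ≤ m) (hn : 2 ≤ n) {u v : L}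
    (hu : R.OrdinaryLine u) (hv : R.OrdinaryLine v) (huv : u ≠ v) {p : P}
    (hpu : R.incid p u) (hpv : R.incid p v) :
    (NS R u ∩ NS R v).ncard = n + m * (m - 1) - 2 := by
  haveI : Nonempty L := nonempty_L R h
  have hpD : p ≠ R.D := ord_point R hu hpu
  -- any common point of u and v equals p
  have hcomm : ∀ q, R.incid q u → R.incid q v → q = p := fun q hqu hqv =>
    meet_unique R huv hqu hqv hpu hpv
  set S1 : Set L := (NS R u ∩ NS R v) ∩ {l | R.incid p l} with hS1
  set S2 : Set L := (NS R u ∩ NS R v) \ {l | R.incid p l} with hS2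
  have hsplit : NS R u ∩ NS R v = S1 ∪ S2 := (Set.inter_union_diff _ _).symm
  have hdisj12 : Disjoint S1 S2 := Set.disjoint_left.2 fun l hl1 hl2 => hl2.2 hl1.2
  -- S1 : ordinary lines through p other than u, v
  have hS1eq : S1 = {l | R.OrdinaryLine l ∧ R.incid p l} \ {u, v} := by
    ext l
    constructor
    · rintro ⟨⟨⟨hord, hlu, -⟩, ⟨-, hlv, -⟩⟩, hpl⟩
      exact ⟨⟨hord, hpl⟩, by simp [hlu, hlv]⟩
    · rintro ⟨⟨hord, hpl⟩, hne⟩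
      simp only [Set.mem_insert_iff, Set.mem_singleton_iff, not_or] at hne
      exact ⟨⟨⟨hord, hne.1, p, hpu, hpl⟩, ⟨hord, hne.2, p, hpv, hpl⟩⟩, hpl⟩
  have hS1card : S1.ncard = n - 2 := by
    have hsub : ({u, v} : Set L) ⊆ {l | R.OrdinaryLine l ∧ R.incid p l} := by
      rintro l (rfl | rfl)
      · exact ⟨hu, hpu⟩
      · exact ⟨hv, hpv⟩
    rw [hS1eq, Set.ncard_diff hsub (Set.toFinite _), lines_through R h hm hpD,
      Set.ncard_pair huv]
  -- S2 : via pairs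
  set A : Set P := R.points u \ {p} with hA
  set B : Set P := R.points v \ {p} with hB
  set T : Set (P × P) := {x ∈ A ×ˢ B | lineThrough R x.1 R.D ≠ lineThrough R x.2 R.D} with hT
  set Bad : Set (P × P) := {x ∈ A ×ˢ B | lineThrough R x.1 R.D = lineThrough R x.2 R.D} with hBad
  have main : ∀ q r : P, q ∈ A → r ∈ B →
      lineThrough R q R.D ≠ lineThrough R r R.D →
      q ≠ r ∧ R.OrdinaryLine (lineThrough R q r) ∧ lineThrough R q r ≠ u ∧
        lineThrough R q r ≠ v ∧ ¬ R.incid p (lineThrough R q r) := by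
    rintro q r ⟨hq, hqp⟩ ⟨hr, hrp⟩ hsne
    simp only [Set.mem_singleton_iff] at hqp hrp
    have hqD : q ≠ R.D := ord_point R hu hq
    have hrD : r ≠ R.D := ord_point R hv hr
    have hqr : q ≠ r := fun e => hqp (hcomm q hq (e ▸ hr))
    have hord : R.OrdinaryLine (lineThrough R q r) := fun hD =>
      hsne ((eq_lineThrough R hqD (lineThrough_left R hqr) hD).symm.trans
        (eq_lineThrough R hrD (lineThrough_right R hqr) hD))
    have hlu : lineThrough R q r ≠ u := fun e =>
      hrp (hcomm r (e ▸ lineThrough_right R hqr) hr)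
    have hlv : lineThrough R q r ≠ v := fun e =>
      hqp (hcomm q hq (e ▸ lineThrough_left R hqr))
    refine ⟨hqr, hord, hlu, hlv, fun hpl => ?_⟩
    have hpq : p ≠ q := fun e => hqp e.symm
    exact hlu (unique_line R hpq hpl (lineThrough_left R hqr) hpu hq)
  have key : (fun x : P × P => lineThrough R x.1 x.2) '' T = S2 := by
    ext l
    constructor
    · rintro ⟨⟨q, r⟩, ⟨⟨hq, hr⟩, hcond⟩, rfl⟩
      obtain ⟨hqr, hord, hlu, hlv, hpl⟩ := main q r hq hr hcond
      exact ⟨⟨⟨hord, hlu, q, hq.1, lineThrough_left R hqr⟩,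
        ⟨hord, hlv, r, hr.1, lineThrough_right R hqr⟩⟩, hpl⟩
    · rintro ⟨⟨⟨hord, hlu, q, hqu, hql⟩, ⟨-, hlv, r, hrv, hrl⟩⟩, hpl⟩
      simp only [Set.mem_setOf_eq] at hpl
      have hqp : q ≠ p := fun e => hpl (e ▸ hql)
      have hrp : r ≠ p := fun e => hpl (e ▸ hrl)
      have hqr : q ≠ r := fun e => hqp (hcomm q hqu (e ▸ hrv))
      have hqD : q ≠ R.D := ord_point R hord hql
      have hrD : r ≠ R.D := ord_point R hord hrl
      have hcond : lineThrough R q R.D ≠ lineThrough R r R.D := by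
        intro e
        have hqs : R.incid q (lineThrough R q R.D) := lineThrough_left R hqD
        have hrs : R.incid r (lineThrough R q R.D) := by rw [e]; exact lineThrough_left R hrD
        have : l = lineThrough R q R.D := unique_line R hqr hql hrl hqs hrs
        exact hord (this ▸ lineThrough_right R hqD)
      exact ⟨⟨q, r⟩, ⟨⟨⟨hqu, hqp⟩, ⟨hrv, hrp⟩⟩, hcond⟩, (eq_lineThrough R hqr hql hrl).symm⟩
  have hinj : Set.InjOn (fun x : P × P => lineThrough R x.1 x.2) T := by
    rintro ⟨q1, r1⟩ ⟨⟨hq1, hr1⟩, hc1⟩ ⟨q2, r2⟩ ⟨⟨hq2, hr2⟩, hc2⟩ he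
    simp only at he
    obtain ⟨h11, -, hlu1, hlv1, -⟩ := main q1 r1 hq1 hr1 hc1
    obtain ⟨h22, -, -, -, -⟩ := main q2 r2 hq2 hr2 hc2
    have e1 : q1 = q2 := meet_unique R hlu1 (lineThrough_left R h11) hq1.1
      (by rw [he]; exact lineThrough_left R h22) hq2.1
    have e2 : r1 = r2 := meet_unique R hlv1 (lineThrough_right R h11) hr1.1
      (by rw [he]; exact lineThrough_right R h22) hr2.1
    rw [Prod.mk.injEq]
    exact ⟨e1, e2⟩
  have hAcard : A.ncard = m := by
    rw [hA, Set.ncard_diff_singleton_of_mem (show p ∈ R.points u from hpu), points_ord R h hu]; omega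
  have hBcard : B.ncard = m := by
    rw [hB, Set.ncard_diff_singleton_of_mem (show p ∈ R.points v from hpv), points_ord R h hv]; omega
  have hTeq : T = (A ×ˢ B) \ Bad := by
    ext x
    simp only [hT, hBad, Set.mem_setOf_eq, Set.mem_diff]
    tauto
  have hBadsub : Bad ⊆ A ×ˢ B := fun x hx => hx.1
  have hBadcard : Bad.ncard = m := by
    have hbij : Prod.fst '' Bad = A := by
      ext q
      constructor
      · rintro ⟨⟨q', r⟩, ⟨⟨hq', -⟩, -⟩, rfl⟩
        exact hq'
      · rintro ⟨hq, hqp⟩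
        simp only [Set.mem_singleton_iff] at hqp
        have hqD : q ≠ R.D := ord_point R hu hq
        have hsSpec : R.SpecialLine (lineThrough R q R.D) := special_lineThrough R hqD
        have hvs : v ≠ lineThrough R q R.D := fun e => hv (e ▸ hsSpec)
        obtain ⟨r, ⟨hrs, hrv⟩, -⟩ := R.A5 (lineThrough R q R.D) v hsSpec hvs
        have hrD : r ≠ R.D := ord_point R hv hrv
        have hrp : r ≠ p := by
          intro e
          subst e
          exact hu (unique_line R (fun e2 => hqp e2.symm) hpu hq hrs
            (lineThrough_left R hqD) ▸ hsSpec)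
        exact ⟨⟨q, r⟩, ⟨⟨⟨hq, hqp⟩, ⟨hrv, hrp⟩⟩,
          eq_lineThrough R hrD hrs (lineThrough_right R hqD)⟩, rfl⟩
    have hfinj : Set.InjOn Prod.fst Bad := by
      rintro ⟨q1, r1⟩ ⟨⟨hq1, hr1⟩, hc1⟩ ⟨q2, r2⟩ ⟨⟨hq2, hr2⟩, hc2⟩ he
      simp only at he
      subst he
      have hqD : q1 ≠ R.D := ord_point R hu hq1.1
      have hr1D : r1 ≠ R.D := ord_point R hv hr1.1
      have hr2D : r2 ≠ R.D := ord_point R hv hr2.1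
      have hsSpec : R.SpecialLine (lineThrough R q1 R.D) := special_lineThrough R hqD
      have hsv : lineThrough R q1 R.D ≠ v := fun e => hv (e ▸ hsSpec)
      have hr1s : R.incid r1 (lineThrough R q1 R.D) := by
        rw [hc1]; exact lineThrough_left R hr1D
      have hr2s : R.incid r2 (lineThrough R q1 R.D) := by
        rw [hc2]; exact lineThrough_left R hr2D
      have : r1 = r2 := meet_unique R hsv hr1s hr1.1 hr2s hr2.1
      rw [this]
    rw [← hAcard, ← hbij, Set.ncard_image_of_injOn hfinj]
  have hS2card : S2.ncard = m * m - m := by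
    rw [← key, Set.ncard_image_of_injOn hinj, hTeq, Set.ncard_diff hBadsub (Set.toFinite _),
      hBadcard, ncard_sprod, hAcard, hBcard]
  rw [hsplit, Set.ncard_union_eq hdisj12 (Set.toFinite _) (Set.toFinite _), hS1card, hS2card]
  have hmm : m * m = m * (m - 1) + m := by
    calc m * m = m * ((m - 1) + 1) := by rw [Nat.sub_add_cancel hm]
    _ = m * (m - 1) + m := by ring
  omega

end PRAux
namespace PRAux

set_option linter.unusedSectionVars false

open ProjRect Set

variable {P L : Type*} (R : ProjRect P L) [Fintype P] [Fintype L] {m n : ℕ}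

theorem lineGraph_adj (u v : {l : L // R.OrdinaryLine l}) :
    (R.lineGraph).Adj u v ↔ u ≠ v ∧ ∃ p, R.incid p u.1 ∧ R.incid p v.1 := Iff.rfl

theorem nbr_image (u : {l : L // R.OrdinaryLine l}) :
    Subtype.val '' ((R.lineGraph).neighborSet u) = NS R u.1 := by
  ext l
  constructor
  · rintro ⟨v, hv, rfl⟩
    rw [SimpleGraph.mem_neighborSet, lineGraph_adj] at hv
    obtain ⟨hne, p, h1, h2⟩ := hv
    exact ⟨v.2, fun e => hne (Subtype.ext e.symm), p, h1, h2⟩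
  · rintro ⟨hord, hne, p, h1, h2⟩
    refine ⟨⟨l, hord⟩, ?_, rfl⟩
    rw [SimpleGraph.mem_neighborSet, lineGraph_adj]
    exact ⟨fun e => hne (congrArg Subtype.val e).symm, p, h1, h2⟩

theorem nbr_ncard (u : {l : L // R.OrdinaryLine l}) :
    ((R.lineGraph).neighborSet u).ncard = (NS R u.1).ncard := by
  rw [← nbr_image R u, Set.ncard_image_of_injective _ Subtype.val_injective]

theorem nbr_inter_ncard (u v : {l : L // R.OrdinaryLine l}) :
    ((R.lineGraph).neighborSet u ∩ (R.lineGraph).neighborSet v).ncard =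
      (NS R u.1 ∩ NS R v.1).ncard := by
  rw [← nbr_image R u, ← nbr_image R v, ← Set.image_inter Subtype.val_injective,
    Set.ncard_image_of_injective _ Subtype.val_injective]

end PRAux
/-- The graph of lines of a finite projective rectangle of order (m,n) is
strongly regular with parameters ν = n², r = (m+1)(n-1), λ = n + m(m-1) - 2, μ = m(m+1). -/
theorem stmt10 {P L : Type*} [Fintype P] [Fintype L] (R : ProjRect P L) (m n : ℕ)
    (h : R.HasOrder m n) :
    Nat.card {l : L // R.OrdinaryLine l} = n ^ 2 ∧
    (∀ v : {l : L // R.OrdinaryLine l},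
      ((R.lineGraph).neighborSet v).ncard = (m + 1) * (n - 1)) ∧
    (∀ u v : {l : L // R.OrdinaryLine l}, (R.lineGraph).Adj u v →
      ((R.lineGraph).neighborSet u ∩ (R.lineGraph).neighborSet v).ncard = n + m * (m - 1) - 2) ∧
    (∀ u v : {l : L // R.OrdinaryLine l}, u ≠ v → ¬(R.lineGraph).Adj u v →
      ((R.lineGraph).neighborSet u ∩ (R.lineGraph).neighborSet v).ncard = m * (m + 1)) := by
  classical
  have hm := PRAux.m_pos R h
  have hn := PRAux.n_ge_two R h
  refine ⟨?_, ?_, ?_, ?_⟩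
  · have h1 := PRAux.ord_lines_ncard R h hm
    have h2 : Nat.card {l : L // R.OrdinaryLine l} = {l : L | R.OrdinaryLine l}.ncard :=
      Nat.card_coe_set_eq _
    rw [h2, h1, pow_two]
  · intro v
    rw [PRAux.nbr_ncard R v]
    exact PRAux.NS_ncard R h hm v.2
  · intro u v hadj
    rw [PRAux.lineGraph_adj] at hadj
    obtain ⟨hne, p, hpu, hpv⟩ := hadj
    rw [PRAux.nbr_inter_ncard R u v]
    exact PRAux.common_adj R h hm hn u.2 v.2 (fun e => hne (Subtype.ext e)) hpu hpv
  · intro u v hne hnadj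
    rw [PRAux.lineGraph_adj] at hnadj
    have hdisj : ∀ p, ¬(R.incid p u.1 ∧ R.incid p v.1) :=
      fun p hp => hnadj ⟨hne, p, hp.1, hp.2⟩
    rw [PRAux.nbr_inter_ncard R u v]
    exact PRAux.common_nonadj R h u.2 v.2 (fun e => hne (Subtype.ext e)) hdisj
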